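/- If T1 and T2 are (unrooted) binary phylogenetic trees on the same leaf-set of cardinality n, and T1 is a caterpillar, then mast{T1, T2} ≥ (1/3)·log n. -/

import Mathlib

/-!
# Rooted binary phylogenetic trees

`RTree L` is the type of rooted binary trees with leaves labelled by elements of `L`:
every internal vertex has exactly two children (a left child and a right child), and
a tree with one leaf is a single vertex.
-/

inductive RTree (L : Type) : Type
  | leaf : L → RTree L
  | node : RTree L → RTree L → RTree L

namespace RTree

variable {L : Type}

/-- The list of leaf labels of a rooted binary tree, read from left to right. -/
def leafList : RTree L → List L
  | leaf b => [b]
  | node l r => leafList l ++ leafList r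

/-- The number of leaves of a rooted binary tree. -/
def numLeaves (T : RTree L) : ℕ := T.leafList.length

/-- The set of leaf labels of a rooted binary tree. -/
def leafSet (T : RTree L) : Set L := {b | b ∈ T.leafList}

/-- The height of a rooted binary tree: the maximum distance from the root to a leaf. -/
def height : RTree L → ℕ
  | leaf _ => 0
  | node l r => max (height l) (height r) + 1

/-- A rooted binary tree is balanced if all of its leaves are at the same distance
from the root. -/
def IsBalanced : RTree L → Prop
  | leaf _ => True
  | node l r => IsBalanced l ∧ IsBalanced r ∧ height l = height r

/-- A rooted binary tree is phylogenetic if its leaves are labelled bijectively by a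
finite set, i.e. all leaf labels are distinct. -/
def IsPhylo (T : RTree L) : Prop := T.leafList.Nodup

/-- `Embeds S T` is the subtree relation `S ⪯ T`: there is an injective map `f` from the
vertices of `S` to the vertices of `T` such that `f x = x` for every leaf `x` of `S`
(leaves being identified across trees by their labels) and
`f (x ∧ y) = f x ∧ f y` for all vertices `x`, `y` of `S`, where `∧` denotes the most
recent common ancestor.  Equivalently (for trees with distinct leaf labels), `S` is the
restriction of `T` to the leaf set of `S`, up to rooted isomorphism; this structural
characterization is taken as the definition. -/
inductive Embeds : RTree L → RTree L → Prop
  | leaf (b : L) : Embeds (RTree.leaf b) (RTree.leaf b)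
  | left {S l r : RTree L} : Embeds S l → Embeds S (RTree.node l r)
  | right {S l r : RTree L} : Embeds S r → Embeds S (RTree.node l r)
  | pair {s₁ s₂ l r : RTree L} :
      Embeds s₁ l → Embeds s₂ r → Embeds (RTree.node s₁ s₂) (RTree.node l r)
  | pair_swap {s₁ s₂ l r : RTree L} :
      Embeds s₁ r → Embeds s₂ l → Embeds (RTree.node s₁ s₂) (RTree.node l r)

/-- `mast T₁ T₂` is the maximum cardinality of a subset `X ⊆ L(T₁) ∩ L(T₂)` such that
the restrictions `T₁|X` and `T₂|X` are isomorphic; equivalently, the maximum number of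
leaves of a rooted binary phylogenetic tree `S` with `S ⪯ T₁` and `S ⪯ T₂`. -/
noncomputable def mast (T₁ T₂ : RTree L) : ℕ :=
  sSup {n | ∃ S : RTree L, S.IsPhylo ∧ Embeds S T₁ ∧ Embeds S T₂ ∧ S.numLeaves = n}

end RTree

/-!
# Unrooted binary phylogenetic trees, via rooted representatives

An unrooted binary phylogenetic tree (all internal vertices of degree 3) with at least
two leaves is represented by any rooted binary tree obtained from it by subdividing an
edge and rooting there; conversely, suppressing the (degree-2) root of a rooted binary
tree yields an unrooted one.  Two rooted trees represent the same unrooted tree (i.e.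
the unrooted trees are isomorphic by a graph isomorphism fixing every leaf label) iff
they are related by the equivalence relation `URel` generated by moving the root across
an edge together with (unordered) rooted isomorphism.
-/

namespace RTree

variable {L : Type}

/-- Rooted isomorphism of rooted binary trees, fixing all leaf labels (the two children
of a vertex are unordered). -/
inductive RIso : RTree L → RTree L → Prop
  | leaf (b : L) : RIso (RTree.leaf b) (RTree.leaf b)
  | pair {a b c d : RTree L} :
      RIso a c → RIso b d → RIso (RTree.node a b) (RTree.node c d)
  | pair_swap {a b c d : RTree L} :
      RIso a d → RIso b c → RIso (RTree.node a b) (RTree.node c d)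

/-- Moving the root of a rooted binary tree across one edge of the underlying unrooted
tree: this does not change the unrooted tree obtained by suppressing the root. -/
inductive RootMove : RTree L → RTree L → Prop
  | assoc (a b c : RTree L) :
      RootMove (RTree.node a (RTree.node b c)) (RTree.node (RTree.node a b) c)

/-- `URel S T` holds iff the unrooted binary trees obtained from `S` and `T` by
suppressing their roots are isomorphic by a graph isomorphism fixing every leaf label. -/
def URel (S T : RTree L) : Prop :=
  Relation.EqvGen (fun X Y => RootMove X Y ∨ RIso X Y) S T

/-- `umast T₁ T₂` is the maximum agreement subtree size of the *unrooted* binary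
phylogenetic trees represented by `T₁` and `T₂`: the maximum cardinality of a set
`X ⊆ L(T₁) ∩ L(T₂)` such that the unrooted restrictions `T₁|X` and `T₂|X` are
isomorphic (fixing leaf labels).  Equivalently, the maximum number of leaves of a
common unrooted subtree, given here by a pair of rooted representatives. -/
noncomputable def umast (T₁ T₂ : RTree L) : ℕ :=
  sSup {n | ∃ S₁ S₂ : RTree L, S₁.IsPhylo ∧ S₂.IsPhylo ∧
    Embeds S₁ T₁ ∧ Embeds S₂ T₂ ∧ URel S₁ S₂ ∧ S₁.numLeaves = n}

end RTree

namespace RTree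

variable {L : Type}

/-- The tree consisting of a single leaf. -/
def IsLeafTree : RTree L → Prop
  | RTree.leaf _ => True
  | RTree.node _ _ => False

/-- A rooted caterpillar: at every internal vertex, at least one child is a leaf. -/
def IsCatR : RTree L → Prop
  | RTree.leaf _ => True
  | RTree.node l r => (IsLeafTree l ∧ IsCatR r) ∨ (IsLeafTree r ∧ IsCatR l)

/-- An unrooted binary phylogenetic tree is a caterpillar if its internal vertices form
a path; equivalently, some rooted representative of it is a rooted caterpillar. -/
def UCaterpillar (T : RTree L) : Prop := ∃ S : RTree L, URel S T ∧ IsCatR S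

end RTree

/-! ### Auxiliary development for Statement 10 -/

namespace RTree

variable {L : Type}

/-- The canonical caterpillar ("comb") on a nonempty list of labels. -/
def comb : L → List L → RTree L
  | x, [] => leaf x
  | x, y :: ys => node (leaf x) (comb y ys)

@[simp] lemma leafList_comb (x : L) (xs : List L) : (comb x xs).leafList = x :: xs := by
  induction xs generalizing x with
  | nil => rfl
  | cons y ys ih => simp [comb, leafList, ih]

lemma leafList_ne_nil (T : RTree L) : T.leafList ≠ [] := by
  induction T with
  | leaf b => simp [leafList]
  | node l r ihl ihr =>
    simp only [leafList, ne_eq, List.append_eq_nil_iff]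
    rintro ⟨h, -⟩
    exact ihl h

lemma embeds_leaf_of_mem {b : L} {T : RTree L} (h : b ∈ T.leafList) : Embeds (leaf b) T := by
  induction T with
  | leaf c =>
    simp only [leafList, List.mem_singleton] at h
    subst h; exact Embeds.leaf b
  | node l r ihl ihr =>
    simp only [leafList, List.mem_append] at h
    rcases h with h | h
    · exact Embeds.left (ihl h)
    · exact Embeds.right (ihr h)

lemma embeds_swap {S l r : RTree L} (h : Embeds S (node l r)) : Embeds S (node r l) := by
  cases h with
  | left h => exact Embeds.right h
  | right h => exact Embeds.left h
  | pair h₁ h₂ => exact Embeds.pair_swap h₁ h₂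
  | pair_swap h₁ h₂ => exact Embeds.pair h₁ h₂

lemma riso_refl : ∀ T : RTree L, RIso T T
  | leaf b => RIso.leaf b
  | node l r => RIso.pair (riso_refl l) (riso_refl r)

lemma riso_symm {S T : RTree L} (h : RIso S T) : RIso T S := by
  induction h with
  | leaf b => exact RIso.leaf b
  | pair _ _ ih₁ ih₂ => exact RIso.pair ih₁ ih₂
  | pair_swap _ _ ih₁ ih₂ => exact RIso.pair_swap ih₂ ih₁

lemma riso_trans {A B C : RTree L} (h₁ : RIso A B) (h₂ : RIso B C) : RIso A C := by
  induction h₁ generalizing C with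
  | leaf b => exact h₂
  | pair p q ih₁ ih₂ =>
    cases h₂ with
    | pair p' q' => exact RIso.pair (ih₁ p') (ih₂ q')
    | pair_swap p' q' => exact RIso.pair_swap (ih₁ p') (ih₂ q')
  | pair_swap p q ih₁ ih₂ =>
    cases h₂ with
    | pair p' q' => exact RIso.pair_swap (ih₁ q') (ih₂ p')
    | pair_swap p' q' => exact RIso.pair (ih₁ q') (ih₂ p')

lemma embeds_of_riso {X Y : RTree L} (h : RIso X Y) : ∀ {S}, Embeds S X → Embeds S Y := by
  induction h with
  | leaf b => exact fun h => h
  | pair h₁ h₂ ih₁ ih₂ =>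
    intro S hS
    cases hS with
    | left h => exact Embeds.left (ih₁ h)
    | right h => exact Embeds.right (ih₂ h)
    | pair p q => exact Embeds.pair (ih₁ p) (ih₂ q)
    | pair_swap p q => exact Embeds.pair_swap (ih₂ p) (ih₁ q)
  | pair_swap h₁ h₂ ih₁ ih₂ =>
    intro S hS
    cases hS with
    | left h => exact Embeds.right (ih₁ h)
    | right h => exact Embeds.left (ih₂ h)
    | pair p q => exact Embeds.pair_swap (ih₁ p) (ih₂ q)
    | pair_swap p q => exact Embeds.pair (ih₂ p) (ih₁ q)

lemma riso_perm {S T : RTree L} (h : RIso S T) : S.leafList.Perm T.leafList := by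
  induction h with
  | leaf b => exact List.Perm.refl _
  | pair _ _ ih₁ ih₂ =>
    simp only [leafList]
    exact ih₁.append ih₂
  | pair_swap _ _ ih₁ ih₂ =>
    simp only [leafList]
    exact (ih₁.append ih₂).trans List.perm_append_comm

lemma urel_refl (T : RTree L) : URel T T := Relation.EqvGen.refl T
lemma urel_symm {S T : RTree L} (h : URel S T) : URel T S := Relation.EqvGen.symm _ _ h
lemma urel_trans {S T U : RTree L} (h₁ : URel S T) (h₂ : URel T U) : URel S U :=
  Relation.EqvGen.trans _ _ _ h₁ h₂
lemma urel_of_riso {S T : RTree L} (h : RIso S T) : URel S T :=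
  Relation.EqvGen.rel _ _ (Or.inr h)
lemma urel_of_rootMove {S T : RTree L} (h : RootMove S T) : URel S T :=
  Relation.EqvGen.rel _ _ (Or.inl h)

lemma rootMove_leafList {S T : RTree L} (h : RootMove S T) : S.leafList = T.leafList := by
  cases h with
  | assoc a b c => simp [leafList, List.append_assoc]

lemma urel_perm {S T : RTree L} (h : URel S T) : S.leafList.Perm T.leafList := by
  induction h with
  | rel x y h =>
    rcases h with h | h
    · exact (rootMove_leafList h) ▸ List.Perm.refl _
    · exact riso_perm h
  | refl x => exact List.Perm.refl _
  | symm x y _ ih => exact ih.symm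
  | trans x y z _ _ ih₁ ih₂ => exact ih₁.trans ih₂

lemma rootMove_transfer {X Y : RTree L} (h : RootMove X Y) :
    ∀ {S}, Embeds S X → ∃ S', URel S S' ∧ Embeds S' Y := by
  cases h with
  | assoc a b c =>
    intro S hS
    cases hS with
    | left h => exact ⟨S, urel_refl S, Embeds.left (Embeds.left h)⟩
    | right h =>
      cases h with
      | left h => exact ⟨_, urel_refl _, Embeds.left (Embeds.right h)⟩
      | right h => exact ⟨_, urel_refl _, Embeds.right h⟩
      | pair p q => exact ⟨_, urel_refl _, Embeds.pair (Embeds.right p) q⟩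
      | pair_swap p q => exact ⟨_, urel_refl _, Embeds.pair_swap p (Embeds.right q)⟩
    | pair h₁ h₂ =>
      cases h₂ with
      | left h => exact ⟨_, urel_refl _, Embeds.left (Embeds.pair h₁ h)⟩
      | right h => exact ⟨_, urel_refl _, Embeds.pair (Embeds.left h₁) h⟩
      | pair p q =>
        exact ⟨_, urel_of_rootMove (RootMove.assoc _ _ _), Embeds.pair (Embeds.pair h₁ p) q⟩
      | pair_swap p q =>
        refine ⟨_, ?_, Embeds.pair (Embeds.pair h₁ q) p⟩
        exact urel_trans
          (urel_of_riso (RIso.pair (riso_refl _) (RIso.pair_swap (riso_refl _) (riso_refl _))))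
          (urel_of_rootMove (RootMove.assoc _ _ _))
    | pair_swap h₁ h₂ =>
      cases h₁ with
      | left h => exact ⟨_, urel_refl _, Embeds.left (Embeds.pair_swap h h₂)⟩
      | right h => exact ⟨_, urel_refl _, Embeds.pair_swap h (Embeds.left h₂)⟩
      | pair p q =>
        refine ⟨_, ?_, Embeds.pair (Embeds.pair h₂ p) q⟩
        exact urel_trans
          (urel_of_riso (RIso.pair_swap (riso_refl _) (riso_refl _)))
          (urel_of_rootMove (RootMove.assoc _ _ _))
      | pair_swap p q =>
        refine ⟨_, ?_, Embeds.pair (Embeds.pair h₂ q) p⟩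
        exact urel_trans
          (urel_of_riso (RIso.pair_swap (RIso.pair_swap (riso_refl _) (riso_refl _)) (riso_refl _)))
          (urel_of_rootMove (RootMove.assoc _ _ _))

lemma rootMove_transfer' {X Y : RTree L} (h : RootMove X Y) :
    ∀ {S}, Embeds S Y → ∃ S', URel S S' ∧ Embeds S' X := by
  cases h with
  | assoc a b c =>
    intro S hS
    obtain ⟨S₁, u₁, e₁⟩ := rootMove_transfer (RootMove.assoc c a b) (embeds_swap hS)
    obtain ⟨S₂, u₂, e₂⟩ := rootMove_transfer (RootMove.assoc b c a) (embeds_swap e₁)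
    exact ⟨S₂, urel_trans u₁ u₂, embeds_swap e₂⟩

lemma urel_transfer {X Y : RTree L} (h : URel X Y) :
    ∀ S, Embeds S X → ∃ S', URel S S' ∧ Embeds S' Y := by
  have main : (∀ S, Embeds S X → ∃ S', URel S S' ∧ Embeds S' Y) ∧
      (∀ S, Embeds S Y → ∃ S', URel S S' ∧ Embeds S' X) := by
    induction h with
    | rel x y h =>
      rcases h with h | h
      · exact ⟨fun S hS => rootMove_transfer h hS, fun S hS => rootMove_transfer' h hS⟩
      · exact ⟨fun S hS => ⟨_, urel_refl _, embeds_of_riso h hS⟩,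
          fun S hS => ⟨_, urel_refl _, embeds_of_riso (riso_symm h) hS⟩⟩
    | refl x => exact ⟨fun S hS => ⟨_, urel_refl _, hS⟩, fun S hS => ⟨_, urel_refl _, hS⟩⟩
    | symm x y _ ih => exact ⟨ih.2, ih.1⟩
    | trans x y z _ _ ih₁ ih₂ =>
      constructor
      · intro S hS
        obtain ⟨S', u, e⟩ := ih₁.1 S hS
        obtain ⟨S'', u', e'⟩ := ih₂.1 S' e
        exact ⟨S'', urel_trans u u', e'⟩
      · intro S hS
        obtain ⟨S', u, e⟩ := ih₂.2 S hS
        obtain ⟨S'', u', e'⟩ := ih₁.2 S' e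
        exact ⟨S'', urel_trans u u', e'⟩
  exact main.1

lemma embeds_multiset_le {S T : RTree L} (h : Embeds S T) :
    (S.leafList : Multiset L) ≤ (T.leafList : Multiset L) := by
  induction h with
  | leaf b => exact le_refl _
  | @left S l r _ ih =>
    show _ ≤ ((l.leafList ++ r.leafList : List L) : Multiset L)
    rw [← Multiset.coe_add]
    exact le_trans ih (le_add_right (le_refl _))
  | @right S l r _ ih =>
    show _ ≤ ((l.leafList ++ r.leafList : List L) : Multiset L)
    rw [← Multiset.coe_add]
    exact le_trans ih (le_add_left (le_refl _))
  | @pair s₁ s₂ l r _ _ ih₁ ih₂ =>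
    show ((s₁.leafList ++ s₂.leafList : List L) : Multiset L) ≤
      ((l.leafList ++ r.leafList : List L) : Multiset L)
    rw [← Multiset.coe_add, ← Multiset.coe_add]
    exact add_le_add ih₁ ih₂
  | @pair_swap s₁ s₂ l r _ _ ih₁ ih₂ =>
    show ((s₁.leafList ++ s₂.leafList : List L) : Multiset L) ≤
      ((l.leafList ++ r.leafList : List L) : Multiset L)
    rw [← Multiset.coe_add, ← Multiset.coe_add, add_comm ((l.leafList : Multiset L))]
    exact add_le_add ih₁ ih₂

lemma embeds_numLeaves_le {S T : RTree L} (h : Embeds S T) : S.numLeaves ≤ T.numLeaves := by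
  have := Multiset.card_le_card (embeds_multiset_le h)
  simpa [numLeaves] using this

end RTree
namespace RTree

variable {L : Type}

/-- Left combs, used to reverse a comb by walking the root along the spine. -/
def lcomb : RTree L → List L → RTree L
  | t, [] => t
  | t, b :: bs => lcomb (node t (leaf b)) bs

lemma urel_lcomb : ∀ (ys : List L) (t : RTree L) (y : L),
    URel (node t (comb y ys)) (lcomb (node t (leaf y)) ys)
  | [], t, y => urel_refl _
  | z :: zs, t, y => by
    have h₁ : URel (node t (comb y (z :: zs))) (node (node t (leaf y)) (comb z zs)) :=
      urel_of_rootMove (RootMove.assoc t (leaf y) (comb z zs))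
    exact urel_trans h₁ (urel_lcomb zs (node t (leaf y)) z)

def combT : List L → RTree L → RTree L
  | [], t => t
  | y :: ys, t => node (leaf y) (combT ys t)

lemma riso_combT_congr (as : List L) {A B : RTree L} (h : RIso A B) :
    RIso (combT as A) (combT as B) := by
  induction as with
  | nil => exact h
  | cons z zs ih => exact RIso.pair (riso_refl _) ih

lemma combT_append (as : List L) (y : L) (t : RTree L) :
    combT (as ++ [y]) t = combT as (node (leaf y) t) := by
  induction as with
  | nil => rfl
  | cons z zs ih => simp [combT, ih]

lemma riso_lcomb : ∀ (xs : List L) (t : RTree L), RIso (lcomb t xs) (combT xs.reverse t)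
  | [], t => riso_refl t
  | y :: ys, t => by
    have ih := riso_lcomb ys (node t (leaf y))
    have h₂ : RIso (combT ys.reverse (node t (leaf y))) (combT ys.reverse (node (leaf y) t)) :=
      riso_combT_congr _ (RIso.pair_swap (riso_refl _) (riso_refl _))
    show RIso (lcomb (node t (leaf y)) ys) (combT (y :: ys).reverse t)
    rw [List.reverse_cons, combT_append]
    exact riso_trans ih h₂

lemma comb_eq_combT : ∀ (xs : List L) (x z : L), comb x (xs ++ [z]) = combT (x :: xs) (leaf z)
  | [], x, z => rfl
  | y :: ys, x, z => by
    show node (leaf x) (comb y (ys ++ [z])) = node (leaf x) (combT (y :: ys) (leaf z))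
    rw [comb_eq_combT ys y z]

lemma urel_comb_reverse {x y : L} {xs ys : List L} (h : (x :: xs).reverse = y :: ys) :
    URel (comb x xs) (comb y ys) := by
  have h₁ : URel (comb x xs) (lcomb (leaf x) xs) := by
    cases xs with
    | nil => exact urel_refl _
    | cons z zs => exact urel_lcomb zs (leaf x) z
  have h₂ : RIso (lcomb (leaf x) xs) (combT xs.reverse (leaf x)) := riso_lcomb xs (leaf x)
  rw [List.reverse_cons] at h
  have h₃ : combT xs.reverse (leaf x) = comb y ys := by
    rcases hrev : xs.reverse with _ | ⟨y', w⟩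
    · rw [hrev] at h
      simp only [List.nil_append, List.cons.injEq] at h
      rw [← h.1, ← h.2]
      rfl
    · rw [hrev] at h
      simp only [List.cons_append, List.cons.injEq] at h
      rw [← h.1, ← h.2, comb_eq_combT]
  exact urel_trans h₁ (urel_of_riso (h₃ ▸ h₂))

/-- The spine order of a rooted caterpillar: a list `σ` (a permutation of the leaves)
such that every comb on a nonempty sublist of `σ` embeds. -/
lemma cat_sigma {S : RTree L} (h : IsCatR S) :
    ∃ σ : List L, σ.Perm S.leafList ∧ ∀ x xs, (x :: xs).Sublist σ → Embeds (comb x xs) S := by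
  induction S with
  | leaf b =>
    refine ⟨[b], List.Perm.refl _, ?_⟩
    intro x xs hs
    have hx : x ∈ [b] := hs.subset List.mem_cons_self
    simp only [List.mem_singleton] at hx
    subst hx
    cases xs with
    | nil => exact Embeds.leaf x
    | cons y ys =>
      have hlen := hs.length_le
      simp at hlen
  | node l r ihl ihr =>
    rcases h with ⟨hl, hr⟩ | ⟨hr, hl⟩
    · cases l with
      | node _ _ => exact absurd hl (by simp [IsLeafTree])
      | leaf b =>
        obtain ⟨σr, hperm, hemb⟩ := ihr hr
        refine ⟨b :: σr, ?_, ?_⟩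
        · show (b :: σr).Perm ([b] ++ r.leafList)
          simpa using hperm.cons b
        · intro x xs hs
          cases hs with
          | cons a h' => exact Embeds.right (hemb x xs h')
          | cons_cons a h' =>
            cases xs with
            | nil => exact Embeds.left (Embeds.leaf b)
            | cons y ys => exact Embeds.pair (Embeds.leaf b) (hemb y ys h')
    · cases r with
      | node _ _ => exact absurd hr (by simp [IsLeafTree])
      | leaf b =>
        obtain ⟨σl, hperm, hemb⟩ := ihl hl
        refine ⟨b :: σl, ?_, ?_⟩
        · show (b :: σl).Perm (l.leafList ++ [b])
          exact (hperm.cons b).trans (List.perm_append_singleton b _).symm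
        · intro x xs hs
          cases hs with
          | cons a h' => exact Embeds.left (hemb x xs h')
          | cons_cons a h' =>
            cases xs with
            | nil => exact Embeds.right (Embeds.leaf b)
            | cons y ys => exact Embeds.pair_swap (Embeds.leaf b) (hemb y ys h')

lemma sublist_of_pairwise_idxOf [DecidableEq L] :
    ∀ (σ : List L), σ.Nodup → ∀ zs : List L, (∀ x ∈ zs, x ∈ σ) →
      zs.Pairwise (fun a b => σ.idxOf a < σ.idxOf b) → zs.Sublist σ := by
  intro σ
  induction σ with
  | nil =>
    intro _ zs hm _
    cases zs with
    | nil => exact List.nil_sublist _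
    | cons z zs => exact absurd (hm z List.mem_cons_self) (by simp)
  | cons s σ' ih =>
    intro hnd zs hm hp
    cases zs with
    | nil => exact List.nil_sublist _
    | cons z zs' =>
      obtain ⟨hhead, htail⟩ := List.pairwise_cons.mp hp
      by_cases hz : z = s
      · subst hz
        apply List.Sublist.cons₂
        have hne : ∀ y ∈ zs', y ≠ z := by
          intro y hy he
          have := hhead y hy
          rw [he] at this
          omega
        apply ih (List.Nodup.of_cons hnd) zs'
        · intro y hy
          have : y ∈ z :: σ' := hm y (List.mem_cons_of_mem _ hy)
          rcases List.mem_cons.mp this with h | h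
          · exact absurd h (hne y hy)
          · exact h
        · apply htail.imp_of_mem
          intro a b ha hb hab
          rw [List.idxOf_cons_ne σ' (Ne.symm (hne a ha)),
            List.idxOf_cons_ne σ' (Ne.symm (hne b hb))] at hab
          omega
      · have hzpos : 0 < (s :: σ').idxOf z := by
          rw [List.idxOf_cons_ne σ' (Ne.symm hz)]
          omega
        have hne : ∀ y ∈ z :: zs', y ≠ s := by
          intro y hy
          rcases List.mem_cons.mp hy with rfl | hy'
          · exact hz
          · intro he
            have := hhead y hy'
            rw [he, List.idxOf_cons_self] at this
            omega
        apply List.Sublist.cons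
        apply ih (List.Nodup.of_cons hnd) (z :: zs')
        · intro y hy
          rcases List.mem_cons.mp (hm y hy) with h | h
          · exact absurd h (hne y hy)
          · exact h
        · apply hp.imp_of_mem
          intro a b ha hb hab
          rw [List.idxOf_cons_ne σ' (Ne.symm (hne a ha)),
            List.idxOf_cons_ne σ' (Ne.symm (hne b hb))] at hab
          omega

lemma countP_subadd (p q₁ q₂ : L → Bool) :
    ∀ A : List L, (∀ x ∈ A, p x = true → q₁ x = true ∨ q₂ x = true) →
      A.countP p ≤ A.countP q₁ + A.countP q₂ := by
  intro A
  induction A with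
  | nil => simp
  | cons a A ih =>
    intro h
    have hA := ih (fun x hx => h x (List.mem_cons_of_mem a hx))
    have hh := h a List.mem_cons_self
    rcases hp : p a <;> rcases h1 : q₁ a <;> rcases h2 : q₂ a <;>
      simp_all [List.countP_cons] <;> omega

lemma list_exists_min (f : L → ℕ) : ∀ A : List L, A ≠ [] → ∃ m ∈ A, ∀ y ∈ A, f m ≤ f y := by
  intro A
  induction A with
  | nil => simp
  | cons a A ih =>
    intro _
    cases A with
    | nil => exact ⟨a, List.mem_singleton_self a, by intro y hy; simp at hy; subst hy; rfl⟩
    | cons b B =>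
      obtain ⟨m, hm, hmin⟩ := ih (by simp)
      by_cases h : f a ≤ f m
      · refine ⟨a, List.mem_cons_self, ?_⟩
        intro y hy
        rcases List.mem_cons.mp hy with rfl | hy
        · exact le_refl _
        · exact le_trans h (hmin y hy)
      · refine ⟨m, List.mem_cons_of_mem a hm, ?_⟩
        intro y hy
        rcases List.mem_cons.mp hy with rfl | hy
        · omega
        · exact hmin y hy

lemma list_exists_max (f : L → ℕ) : ∀ A : List L, A ≠ [] → ∃ m ∈ A, ∀ y ∈ A, f y ≤ f m := by
  intro A
  induction A with
  | nil => simp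
  | cons a A ih =>
    intro _
    cases A with
    | nil => exact ⟨a, List.mem_singleton_self a, by intro y hy; simp at hy; subst hy; rfl⟩
    | cons b B =>
      obtain ⟨m, hm, hmax⟩ := ih (by simp)
      by_cases h : f m ≤ f a
      · refine ⟨a, List.mem_cons_self, ?_⟩
        intro y hy
        rcases List.mem_cons.mp hy with rfl | hy
        · exact le_refl _
        · exact le_trans (hmax y hy) h
      · refine ⟨m, List.mem_cons_of_mem a hm, ?_⟩
        intro y hy
        rcases List.mem_cons.mp hy with rfl | hy
        · omega
        · exact hmax y hy

end RTree
namespace RTree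

variable {L : Type}

/-- A "good chain" in `T`: a list of leaves of `T`, all satisfying `P`, pairwise related
by `R`, such that the comb on the list embeds into `T`. -/
structure GoodChain (R : L → L → Prop) (P : L → Bool) (T : RTree L) (zs : List L) : Prop where
  pairwise : zs.Pairwise R
  mem : ∀ x ∈ zs, P x = true ∧ x ∈ T.leafList
  emb : ∀ x xs, zs = x :: xs → Embeds (comb x xs) T

lemma GoodChain.nil {R : L → L → Prop} {P : L → Bool} {T : RTree L} : GoodChain R P T [] :=
  ⟨List.Pairwise.nil, by simp, by simp⟩

lemma GoodChain.mono {R : L → L → Prop} {P Q : L → Bool} {T : RTree L} {zs : List L}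
    (hPQ : ∀ x, P x = true → Q x = true) (h : GoodChain R P T zs) : GoodChain R Q T zs :=
  ⟨h.pairwise, fun x hx => ⟨hPQ x (h.mem x hx).1, (h.mem x hx).2⟩, h.emb⟩

lemma GoodChain.left {R : L → L → Prop} {P : L → Bool} {l r : RTree L} {zs : List L}
    (h : GoodChain R P l zs) : GoodChain R P (node l r) zs := by
  refine ⟨h.pairwise, fun x hx => ⟨(h.mem x hx).1, ?_⟩,
    fun x xs he => Embeds.left (h.emb x xs he)⟩
  show x ∈ (node l r).leafList
  simp only [leafList, List.mem_append]
  exact Or.inl (h.mem x hx).2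

lemma GoodChain.right {R : L → L → Prop} {P : L → Bool} {l r : RTree L} {zs : List L}
    (h : GoodChain R P r zs) : GoodChain R P (node l r) zs := by
  refine ⟨h.pairwise, fun x hx => ⟨(h.mem x hx).1, ?_⟩,
    fun x xs he => Embeds.right (h.emb x xs he)⟩
  show x ∈ (node l r).leafList
  simp only [leafList, List.mem_append]
  exact Or.inr (h.mem x hx).2

lemma GoodChain.consLeft {R : L → L → Prop} {P : L → Bool} {l r : RTree L} {zs : List L}
    {m : L} (hm : m ∈ l.leafList) (hP : P m = true)
    (hrel : ∀ y ∈ zs, R m y) (h : GoodChain R P r zs) :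
    GoodChain R P (node l r) (m :: zs) := by
  refine ⟨List.Pairwise.cons hrel h.pairwise, ?_, ?_⟩
  · intro x hx
    rcases List.mem_cons.mp hx with rfl | hx
    · exact ⟨hP, by simp only [leafList, List.mem_append]; exact Or.inl hm⟩
    · exact ⟨(h.mem x hx).1, by
        simp only [leafList, List.mem_append]; exact Or.inr (h.mem x hx).2⟩
  · intro x xs he
    injection he with e1 e2
    subst e1; subst e2
    cases zs with
    | nil => exact Embeds.left (embeds_leaf_of_mem hm)
    | cons y ys => exact Embeds.pair (embeds_leaf_of_mem hm) (h.emb y ys rfl)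

lemma GoodChain.consRight {R : L → L → Prop} {P : L → Bool} {l r : RTree L} {zs : List L}
    {m : L} (hm : m ∈ r.leafList) (hP : P m = true)
    (hrel : ∀ y ∈ zs, R m y) (h : GoodChain R P l zs) :
    GoodChain R P (node l r) (m :: zs) := by
  refine ⟨List.Pairwise.cons hrel h.pairwise, ?_, ?_⟩
  · intro x hx
    rcases List.mem_cons.mp hx with rfl | hx
    · exact ⟨hP, by simp only [leafList, List.mem_append]; exact Or.inr hm⟩
    · exact ⟨(h.mem x hx).1, by
        simp only [leafList, List.mem_append]; exact Or.inl (h.mem x hx).2⟩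
  · intro x xs he
    injection he with e1 e2
    subst e1; subst e2
    cases zs with
    | nil => exact Embeds.right (embeds_leaf_of_mem hm)
    | cons y ys => exact Embeds.pair_swap (embeds_leaf_of_mem hm) (h.emb y ys rfl)

lemma GoodChain.single {R : L → L → Prop} {P : L → Bool} {T : RTree L} {b : L}
    (hP : P b = true) (hm : b ∈ T.leafList) : GoodChain R P T [b] := by
  refine ⟨List.pairwise_singleton _ _, ?_, ?_⟩
  · intro x hx
    simp only [List.mem_singleton] at hx
    subst hx; exact ⟨hP, hm⟩
  · intro x xs he
    injection he with e1 e2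
    subst e1; subst e2
    exact embeds_leaf_of_mem hm

lemma GoodChain.swap {R : L → L → Prop} {P : L → Bool} {l r : RTree L} {zs : List L}
    (h : GoodChain R P (node l r) zs) : GoodChain R P (node r l) zs := by
  refine ⟨h.pairwise, fun x hx => ⟨(h.mem x hx).1, ?_⟩,
    fun x xs he => embeds_swap (h.emb x xs he)⟩
  have := (h.mem x hx).2
  simp only [leafList, List.mem_append] at this ⊢
  tauto

lemma choose2 {R : L → L → Prop} {P : L → Bool} {T : RTree L} {A B : List L}
    (hA : GoodChain R P T A) (hB : GoodChain R P T B) :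
    ∃ C, GoodChain R P T C ∧ A.length ≤ C.length ∧ B.length ≤ C.length := by
  by_cases h : A.length ≤ B.length
  · exact ⟨B, hB, h, le_refl _⟩
  · exact ⟨A, hA, le_refl _, le_of_not_ge h⟩

lemma choose3 {R : L → L → Prop} {P : L → Bool} {T : RTree L} {A B C : List L}
    (hA : GoodChain R P T A) (hB : GoodChain R P T B) (hC : GoodChain R P T C) :
    ∃ D, GoodChain R P T D ∧ A.length ≤ D.length ∧ B.length ≤ D.length ∧
      C.length ≤ D.length := by
  obtain ⟨C', hC', h1, h2⟩ := choose2 hA hB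
  obtain ⟨D, hD, h3, h4⟩ := choose2 hC' hC
  exact ⟨D, hD, le_trans h1 h3, le_trans h2 h3, h4⟩

lemma pow52_le {e₁ e : ℕ} (h : e₁ + 1 ≤ e) : (5/2:ℝ)^e₁ ≤ (2/5) * (5/2:ℝ)^e := by
  have h1 : (5/2:ℝ)^(e₁+1) ≤ (5/2:ℝ)^e := by
    apply pow_le_pow_right₀ (by norm_num) h
  rw [pow_succ] at h1
  linarith

lemma pow52_le2 {e₁ e : ℕ} (h : e₁ + 2 ≤ e) : (5/2:ℝ)^e₁ ≤ (4/25) * (5/2:ℝ)^e := by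
  have h1 : (5/2:ℝ)^(e₁+2) ≤ (5/2:ℝ)^e := by
    apply pow_le_pow_right₀ (by norm_num) h
  rw [pow_succ, pow_succ] at h1
  nlinarith [pow_nonneg (show (0:ℝ) ≤ 5/2 by norm_num) e₁]

lemma arith2 {x y : ℝ} {e₁ e₂ e : ℕ} (hx : x ≤ (4/25) * (5/2:ℝ)^e₁)
    (hy : y ≤ (4/25) * (5/2:ℝ)^e₂) (h₁ : e₁ + 1 ≤ e) (h₂ : e₂ + 1 ≤ e) :
    x + y ≤ (4/25) * (5/2:ℝ)^e := by
  have a1 := pow52_le h₁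
  have a2 := pow52_le h₂
  have hB : (0:ℝ) ≤ (5/2:ℝ)^e := by positivity
  linarith

lemma arith3 {x y z : ℝ} {e₁ e₂ e₃ e : ℕ} (hx : x ≤ (4/25) * (5/2:ℝ)^e₁)
    (hy : y ≤ (4/25) * (5/2:ℝ)^e₂) (hz : z ≤ (4/25) * (5/2:ℝ)^e₃)
    (h₁ : e₁ + 1 ≤ e) (h₂ : e₂ + 1 ≤ e) (h₃ : e₃ + 2 ≤ e) :
    x + y + z ≤ (4/25) * (5/2:ℝ)^e := by
  have a1 := pow52_le h₁
  have a2 := pow52_le h₂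
  have a3 := pow52_le2 h₃
  have hB : (0:ℝ) ≤ (5/2:ℝ)^e := by positivity
  linarith

/-- The statement of the key counting bound. -/
def Res (f : L → ℕ) (P : L → Bool) (T : RTree L) : Prop :=
  ∃ zs ws : List L,
    GoodChain (fun a b => f a < f b) P T zs ∧
    GoodChain (fun a b => f b < f a) P T ws ∧
    ((T.leafList.countP P : ℝ)) ≤ (4/25) * (5/2:ℝ)^(zs.length + ws.length)

lemma res_swap {f : L → ℕ} {P : L → Bool} {l r : RTree L} (h : Res f P (node r l)) :
    Res f P (node l r) := by
  obtain ⟨zs, ws, hz, hw, hc⟩ := h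
  refine ⟨zs, ws, hz.swap, hw.swap, ?_⟩
  have he : (node l r).leafList.countP P = (node r l).leafList.countP P := by
    simp only [leafList, List.countP_append]
    omega
  rw [he]
  exact hc

end RTree
namespace RTree

variable {L : Type}

lemma caseA {f : L → ℕ} {l r : RTree L} {P : L → Bool}
    (hdisj : ∀ x ∈ l.leafList, ∀ y ∈ r.leafList, f x ≠ f y)
    (IHl : ∀ P : L → Bool, Res f P l) (IHr : ∀ P : L → Bool, Res f P r)
    {Mn Mx : L}
    (hMn : Mn ∈ l.leafList) (hMnP : P Mn = true)
    (hMnmin : ∀ y, P y = true → y ∈ l.leafList ∨ y ∈ r.leafList → f Mn ≤ f y)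
    (hMx : Mx ∈ r.leafList) (hMxP : P Mx = true)
    (hMxmax : ∀ y, P y = true → y ∈ l.leafList ∨ y ∈ r.leafList → f y ≤ f Mx) :
    Res f P (node l r) := by
  obtain ⟨zl, wl, hzl, hwl, hcl⟩ := IHl P
  obtain ⟨zr, wr, hzr, hwr, hcr⟩ := IHr P
  have cand2 : GoodChain (fun a b => f a < f b) P (node l r) (Mn :: zr) := by
    refine GoodChain.consLeft hMn hMnP ?_ hzr
    intro y hy
    obtain ⟨hyP, hyr⟩ := hzr.mem y hy
    exact lt_of_le_of_ne (hMnmin y hyP (Or.inr hyr)) (hdisj Mn hMn y hyr)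
  have cand4 : GoodChain (fun a b => f b < f a) P (node l r) (Mx :: wl) := by
    refine GoodChain.consRight hMx hMxP ?_ hwl
    intro y hy
    obtain ⟨hyP, hyl⟩ := hwl.mem y hy
    exact lt_of_le_of_ne (hMxmax y hyP (Or.inl hyl)) (hdisj y hyl Mx hMx)
  obtain ⟨zs, hzs, hl1, hl2⟩ := choose2 hzl.left cand2
  obtain ⟨ws, hws, hl3, hl4⟩ := choose2 hwr.right cand4
  refine ⟨zs, ws, hzs, hws, ?_⟩
  have hcount : ((node l r).leafList.countP P : ℝ) =
      (l.leafList.countP P : ℝ) + (r.leafList.countP P : ℝ) := by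
    simp only [leafList, List.countP_append]
    push_cast
    ring
  rw [hcount]
  simp only [List.length_cons] at hl2 hl4
  exact arith2 hcl hcr (by omega) (by omega)

lemma caseB {f : L → ℕ} {l r : RTree L} {P : L → Bool}
    (hdisj : ∀ x ∈ l.leafList, ∀ y ∈ r.leafList, f x ≠ f y)
    (IHl : ∀ P : L → Bool, Res f P l) (IHr : ∀ P : L → Bool, Res f P r)
    {Mn Mx : L}
    (hMn : Mn ∈ l.leafList) (hMnP : P Mn = true)
    (hMnmin : ∀ y, P y = true → y ∈ l.leafList ∨ y ∈ r.leafList → f Mn ≤ f y)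
    (hMx : Mx ∈ l.leafList) (hMxP : P Mx = true)
    (hMxmax : ∀ y, P y = true → y ∈ l.leafList ∨ y ∈ r.leafList → f y ≤ f Mx)
    (hFr : ∃ y ∈ r.leafList, P y = true) :
    Res f P (node l r) := by
  classical
  -- minimum and maximum of the selected leaves of r
  have hFrne : r.leafList.filter P ≠ [] := by
    obtain ⟨y, hy, hyP⟩ := hFr
    intro he
    have : y ∈ r.leafList.filter P := List.mem_filter.mpr ⟨hy, hyP⟩
    rw [he] at this
    exact absurd this List.not_mem_nil
  obtain ⟨ym, hymF, hymmin⟩ := list_exists_min f _ hFrne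
  obtain ⟨yM, hyMF, hyMmax⟩ := list_exists_max f _ hFrne
  obtain ⟨hymr, hymP⟩ := List.mem_filter.mp hymF
  obtain ⟨hyMr, hyMP⟩ := List.mem_filter.mp hyMF
  have hymmin' : ∀ y ∈ r.leafList, P y = true → f ym ≤ f y := fun y hy hyP =>
    hymmin y (List.mem_filter.mpr ⟨hy, hyP⟩)
  have hyMmax' : ∀ y ∈ r.leafList, P y = true → f y ≤ f yM := fun y hy hyP =>
    hyMmax y (List.mem_filter.mpr ⟨hy, hyP⟩)
  set P₁ : L → Bool := fun x => P x && decide (f ym < f x) with hP₁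
  set P₂ : L → Bool := fun x => P x && decide (f x < f yM) with hP₂
  have hP₁P : ∀ x, P₁ x = true → P x = true := by
    intro x hx
    rw [hP₁] at hx
    exact (Bool.and_eq_true _ _ |>.mp hx).1
  have hP₂P : ∀ x, P₂ x = true → P x = true := by
    intro x hx
    rw [hP₂] at hx
    exact (Bool.and_eq_true _ _ |>.mp hx).1
  obtain ⟨z₁, w₁, hz₁, hw₁, hc₁⟩ := IHl P₁
  obtain ⟨z₂, w₂, hz₂, hw₂, hc₂⟩ := IHl P₂
  obtain ⟨zr, wr, hzr, hwr, hcr⟩ := IHr P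
  -- increasing chains
  have candz1 : GoodChain (fun a b => f a < f b) P (node l r) (ym :: z₁) := by
    refine GoodChain.consRight hymr hymP ?_ (hz₁.mono hP₁P)
    intro y hy
    have := (hz₁.mem y hy).1
    rw [hP₁, Bool.and_eq_true, decide_eq_true_iff] at this
    exact this.2
  have candz2 : GoodChain (fun a b => f a < f b) P (node l r) z₂ :=
    (hz₂.mono hP₂P).left
  have candz3 : GoodChain (fun a b => f a < f b) P (node l r) (Mn :: zr) := by
    refine GoodChain.consLeft hMn hMnP ?_ hzr
    intro y hy
    obtain ⟨hyP, hyr⟩ := hzr.mem y hy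
    exact lt_of_le_of_ne (hMnmin y hyP (Or.inr hyr)) (hdisj Mn hMn y hyr)
  -- decreasing chains
  have candw1 : GoodChain (fun a b => f b < f a) P (node l r) w₁ :=
    (hw₁.mono hP₁P).left
  have candw2 : GoodChain (fun a b => f b < f a) P (node l r) (yM :: w₂) := by
    refine GoodChain.consRight hyMr hyMP ?_ (hw₂.mono hP₂P)
    intro y hy
    have := (hw₂.mem y hy).1
    rw [hP₂, Bool.and_eq_true, decide_eq_true_iff] at this
    exact this.2
  have candw3 : GoodChain (fun a b => f b < f a) P (node l r) (Mx :: wr) := by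
    refine GoodChain.consLeft hMx hMxP ?_ hwr
    intro y hy
    obtain ⟨hyP, hyr⟩ := hwr.mem y hy
    exact lt_of_le_of_ne (hMxmax y hyP (Or.inr hyr)) (fun e => hdisj Mx hMx y hyr e.symm)
  obtain ⟨zs, hzs, hlz1, hlz2, hlz3⟩ := choose3 candz1 candz2 candz3
  obtain ⟨ws, hws, hlw1, hlw2, hlw3⟩ := choose3 candw1 candw2 candw3
  refine ⟨zs, ws, hzs, hws, ?_⟩
  -- counting
  have hsplit : l.leafList.countP P ≤ l.leafList.countP P₁ + l.leafList.countP P₂ := by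
    apply countP_subadd
    intro x hx hxP
    have hne : f x ≠ f ym := hdisj x hx ym hymr
    rcases lt_or_gt_of_ne hne with hlt | hgt
    · right
      rw [hP₂, Bool.and_eq_true, decide_eq_true_iff]
      exact ⟨hxP, lt_of_lt_of_le hlt (hymmin' yM hyMr hyMP)⟩
    · left
      rw [hP₁, Bool.and_eq_true, decide_eq_true_iff]
      exact ⟨hxP, hgt⟩
  have hcount : ((node l r).leafList.countP P : ℝ) ≤
      (l.leafList.countP P₁ : ℝ) + (l.leafList.countP P₂ : ℝ) + (r.leafList.countP P : ℝ) := by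
    have : (node l r).leafList.countP P = l.leafList.countP P + r.leafList.countP P := by
      simp only [leafList, List.countP_append]
    rw [this]
    have h' : ((List.countP P l.leafList : ℕ) : ℝ) ≤
        ((List.countP P₁ l.leafList + List.countP P₂ l.leafList : ℕ) : ℝ) :=
      Nat.cast_le.mpr hsplit
    push_cast at h' ⊢
    linarith
  refine le_trans hcount ?_
  simp only [List.length_cons] at hlz1 hlz3 hlw2 hlw3
  exact arith3 hc₁ hc₂ hcr (by omega) (by omega) (by omega)

lemma core (f : L → ℕ) :
    ∀ T : RTree L, (T.leafList.map f).Nodup → ∀ P : L → Bool, Res f P T := by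
  intro T
  induction T with
  | leaf b =>
    intro _ P
    by_cases hP : P b = true
    · refine ⟨[b], [b], GoodChain.single hP ?_, GoodChain.single hP ?_, ?_⟩
      · simp [leafList]
      · simp [leafList]
      · show ((List.countP P [b] : ℕ) : ℝ) ≤ _
        rw [List.countP_cons, List.countP_nil]
        simp only [hP, if_true, List.length_singleton]
        norm_num
    · refine ⟨[], [], GoodChain.nil, GoodChain.nil, ?_⟩
      show ((List.countP P [b] : ℕ) : ℝ) ≤ _
      rw [List.countP_cons, List.countP_nil]
      simp only [Bool.not_eq_true] at hP
      simp only [hP]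
      norm_num
  | node l r ihl ihr =>
    intro hnd P
    have hnd2 : (l.leafList.map f).Nodup ∧ (r.leafList.map f).Nodup ∧
        List.Disjoint (l.leafList.map f) (r.leafList.map f) := by
      have : (node l r).leafList = l.leafList ++ r.leafList := rfl
      rw [this, List.map_append] at hnd
      exact List.nodup_append'.mp hnd
    have hdisj : ∀ x ∈ l.leafList, ∀ y ∈ r.leafList, f x ≠ f y := by
      intro x hx y hy e
      exact hnd2.2.2 (List.mem_map_of_mem (f := f) hx) (e ▸ List.mem_map_of_mem (f := f) hy)
    have hdisj' : ∀ x ∈ r.leafList, ∀ y ∈ l.leafList, f x ≠ f y := by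
      intro x hx y hy e
      exact hdisj y hy x hx e.symm
    have IHl := fun P => ihl hnd2.1 P
    have IHr := fun P => ihr hnd2.2.1 P
    by_cases hFl : ∃ x ∈ l.leafList, P x = true
    · by_cases hFr : ∃ x ∈ r.leafList, P x = true
      · -- both sides contain selected leaves: find global min and max
        obtain ⟨x0, hx0, hx0P⟩ := hFl
        have hFne : (node l r).leafList.filter P ≠ [] := by
          intro he
          have : x0 ∈ (node l r).leafList.filter P := by
            refine List.mem_filter.mpr ⟨?_, hx0P⟩
            show x0 ∈ (node l r).leafList
            simp only [leafList, List.mem_append]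
            exact Or.inl hx0
          rw [he] at this
          exact absurd this List.not_mem_nil
        obtain ⟨Mn, hMnF, hMnmin0⟩ := list_exists_min f _ hFne
        obtain ⟨Mx, hMxF, hMxmax0⟩ := list_exists_max f _ hFne
        obtain ⟨hMnT, hMnP⟩ := List.mem_filter.mp hMnF
        obtain ⟨hMxT, hMxP⟩ := List.mem_filter.mp hMxF
        have hMnmin : ∀ y, P y = true → y ∈ l.leafList ∨ y ∈ r.leafList → f Mn ≤ f y := by
          intro y hyP hy
          refine hMnmin0 y (List.mem_filter.mpr ⟨?_, hyP⟩)
          show y ∈ (node l r).leafList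
          simp only [leafList, List.mem_append]
          exact hy
        have hMxmax : ∀ y, P y = true → y ∈ l.leafList ∨ y ∈ r.leafList → f y ≤ f Mx := by
          intro y hyP hy
          refine hMxmax0 y (List.mem_filter.mpr ⟨?_, hyP⟩)
          show y ∈ (node l r).leafList
          simp only [leafList, List.mem_append]
          exact hy
        have hMnmem : Mn ∈ l.leafList ∨ Mn ∈ r.leafList := by
          have := hMnT
          simp only [leafList, List.mem_append] at this
          exact this
        have hMxmem : Mx ∈ l.leafList ∨ Mx ∈ r.leafList := by
          have := hMxT
          simp only [leafList, List.mem_append] at this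
          exact this
        have hMnmin' : ∀ y, P y = true → y ∈ r.leafList ∨ y ∈ l.leafList → f Mn ≤ f y :=
          fun y hyP hy => hMnmin y hyP hy.symm
        have hMxmax' : ∀ y, P y = true → y ∈ r.leafList ∨ y ∈ l.leafList → f y ≤ f Mx :=
          fun y hyP hy => hMxmax y hyP hy.symm
        rcases hMnmem with hMnl | hMnr
        · rcases hMxmem with hMxl | hMxr
          · exact caseB hdisj IHl IHr hMnl hMnP hMnmin hMxl hMxP hMxmax hFr
          · exact caseA hdisj IHl IHr hMnl hMnP hMnmin hMxr hMxP hMxmax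
        · rcases hMxmem with hMxl | hMxr
          · exact res_swap (caseA hdisj' IHr IHl hMnr hMnP hMnmin' hMxl hMxP hMxmax')
          · exact res_swap (caseB hdisj' IHr IHl hMnr hMnP hMnmin' hMxr hMxP hMxmax' ⟨x0, hx0, hx0P⟩)
      · -- no selected leaf in r
        obtain ⟨zs, ws, hzs, hws, hc⟩ := IHl P
        refine ⟨zs, ws, hzs.left, hws.left, ?_⟩
        have hr0 : r.leafList.countP P = 0 := by
          rw [List.countP_eq_zero]
          intro a ha
          simp only [Bool.not_eq_true]
          by_contra hc'
          exact hFr ⟨a, ha, by revert hc'; cases P a <;> simp⟩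
        have : (node l r).leafList.countP P = l.leafList.countP P := by
          simp only [leafList, List.countP_append, hr0, Nat.add_zero]
        rw [this]
        exact hc
    · -- no selected leaf in l
      obtain ⟨zs, ws, hzs, hws, hc⟩ := IHr P
      refine ⟨zs, ws, hzs.right, hws.right, ?_⟩
      have hl0 : l.leafList.countP P = 0 := by
        rw [List.countP_eq_zero]
        intro a ha
        simp only [Bool.not_eq_true]
        by_contra hc'
        exact hFl ⟨a, ha, by revert hc'; cases P a <;> simp⟩
      have : (node l r).leafList.countP P = r.leafList.countP P := by
        simp only [leafList, List.countP_append, hl0, Nat.zero_add]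
      rw [this]
      exact hc

end RTree
namespace RTree

variable {L : Type}

lemma umast_ge {T₁ T₂ S₁ S₂ : RTree L} (h1 : Embeds S₁ T₁) (h2 : Embeds S₂ T₂)
    (hu : URel S₁ S₂) (hp : S₁.IsPhylo) : S₁.numLeaves ≤ umast T₁ T₂ := by
  have hp2 : S₂.IsPhylo := ((urel_perm hu).nodup_iff).mp hp
  apply le_csSup
  · refine ⟨T₁.numLeaves, ?_⟩
    rintro m ⟨A, B, hA, hB, eA, eB, u, rfl⟩
    exact embeds_numLeaves_le eA
  · exact ⟨S₁, S₂, hp, hp2, h1, h2, hu, rfl⟩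

lemma final_arith {n k : ℕ} (hn : 1 ≤ n) (h : (n:ℝ) ≤ (4/25) * (5/2:ℝ)^(2*k)) :
    (1/3 : ℝ) * Real.logb 2 n ≤ (k : ℝ) := by
  have hn0 : (0:ℝ) < n := by exact_mod_cast hn
  have hlog : Real.log n ≤ Real.log ((4/25) * (5/2:ℝ)^(2*k)) := by
    apply Real.log_le_log hn0 h
  rw [Real.log_mul (by norm_num) (by positivity), Real.log_pow] at hlog
  have h1 : Real.log (4/25 : ℝ) ≤ 0 := Real.log_nonpos (by norm_num) (by norm_num)
  have h2 : (2:ℝ) * Real.log (5/2 : ℝ) ≤ 3 * Real.log 2 := by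
    have h3 : Real.log ((5/2:ℝ)^(2:ℕ)) ≤ Real.log ((2:ℝ)^(3:ℕ)) := by
      apply Real.log_le_log (by norm_num) (by norm_num)
    rw [Real.log_pow, Real.log_pow] at h3
    push_cast at h3
    linarith
  have hk0 : (0:ℝ) ≤ (k:ℝ) := Nat.cast_nonneg k
  have h4 : Real.log n ≤ 3 * (k:ℝ) * Real.log 2 := by
    have h5 : (2*(k:ℝ)) * Real.log (5/2:ℝ) ≤ (3*(k:ℝ)) * Real.log 2 := by
      nlinarith
    push_cast at hlog
    linarith
  have hlog2 : 0 < Real.log 2 := Real.log_pos (by norm_num)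
  rw [Real.logb]
  have h6 : Real.log n / Real.log 2 ≤ 3 * (k:ℝ) := by
    rw [div_le_iff₀ hlog2]
    linarith
  linarith

end RTree
/-- If `T₁` and `T₂` are unrooted binary phylogenetic trees on the
same leaf set of cardinality `n` and `T₁` is a caterpillar, then
`mast{T₁,T₂} ≥ (1/3)·log n` (logarithm base 2). -/
theorem stmt_10 {L : Type} (T₁ T₂ : RTree L) (n : ℕ)
    (h₁ : T₁.IsPhylo) (h₂ : T₂.IsPhylo) (hcat : RTree.UCaterpillar T₁)
    (hL : T₁.leafSet = T₂.leafSet) (hn : T₁.numLeaves = n) :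
    (1 / 3 : ℝ) * Real.logb 2 n ≤ (RTree.umast T₁ T₂ : ℝ) := by
  classical
  open RTree in
  obtain ⟨S₀, hS₀T₁, hS₀cat⟩ := hcat
  obtain ⟨σ, hσperm, hσemb⟩ := RTree.cat_sigma hS₀cat
  have hS₀perm : S₀.leafList.Perm T₁.leafList := RTree.urel_perm hS₀T₁
  have hσT₁ : σ.Perm T₁.leafList := hσperm.trans hS₀perm
  have hσnd : σ.Nodup := (hσT₁.nodup_iff).mpr h₁
  have hmemT₁ : ∀ x, x ∈ T₂.leafList → x ∈ T₁.leafList := by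
    intro x hx
    have := Set.ext_iff.mp hL x
    exact this.mpr hx
  have hT₂mem : ∀ x, x ∈ T₂.leafList → x ∈ σ := by
    intro x hx
    exact hσT₁.mem_iff.mpr (hmemT₁ x hx)
  set f : L → ℕ := fun x => σ.idxOf x with hf
  have hfnd : (T₂.leafList.map f).Nodup := by
    refine List.Nodup.map_on ?_ h₂
    intro x hx y hy e
    exact (List.idxOf_inj (hT₂mem x hx)).mp e
  obtain ⟨zs, ws, hzs, hws, hcount⟩ := RTree.core f T₂ hfnd (fun _ => true)
  have hcount' : ((T₂.numLeaves : ℕ) : ℝ) ≤ (4/25) * (5/2:ℝ)^(zs.length + ws.length) := by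
    have : T₂.leafList.countP (fun _ => true) = T₂.leafList.length := by
      rw [List.countP_eq_length]
      intro a _
      rfl
    rw [RTree.numLeaves, ← this]
    exact hcount
  have hn2 : T₂.numLeaves = n := by
    have hperm : T₂.leafList.Perm T₁.leafList := by
      refine (List.perm_ext_iff_of_nodup h₂ h₁).mpr ?_
      intro a
      constructor
      · exact hmemT₁ a
      · intro ha
        exact (Set.ext_iff.mp hL a).mp ha
    rw [RTree.numLeaves, hperm.length_eq, ← RTree.numLeaves, hn]
  have hn1 : 1 ≤ n := by
    rw [← hn, RTree.numLeaves]
    exact List.length_pos_iff.mpr (RTree.leafList_ne_nil T₁)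
  -- a common chain gives a lower bound on umast
  have key : ∀ c : L, ∀ cs : List L, Embeds (RTree.comb c cs) T₂ →
      ((c :: cs).Sublist σ ∨ (c :: cs).reverse.Sublist σ) →
      ((c :: cs).length : ℝ) ≤ (RTree.umast T₁ T₂ : ℝ) := by
    intro c cs hembT₂ hsub
    have hstep : ∃ C₁ : RTree L, Embeds C₁ S₀ ∧ URel C₁ (RTree.comb c cs) ∧
        C₁.IsPhylo ∧ C₁.numLeaves = (c :: cs).length := by
      rcases hsub with hsub | hsub
      · refine ⟨RTree.comb c cs, hσemb c cs hsub, RTree.urel_refl _, ?_, ?_⟩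
        · show (RTree.comb c cs).leafList.Nodup
          rw [RTree.leafList_comb]
          exact hsub.nodup hσnd
        · show (RTree.comb c cs).leafList.length = _
          rw [RTree.leafList_comb]
      · rcases hrev : (c :: cs).reverse with _ | ⟨y, ys⟩
        · exact absurd hrev (by simp)
        · rw [hrev] at hsub
          refine ⟨RTree.comb y ys, hσemb y ys hsub, ?_, ?_, ?_⟩
          · exact RTree.urel_symm (RTree.urel_comb_reverse hrev)
          · show (RTree.comb y ys).leafList.Nodup
            rw [RTree.leafList_comb]
            exact hsub.nodup hσnd
          · show (RTree.comb y ys).leafList.length = _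
            rw [RTree.leafList_comb, ← hrev, List.length_reverse]
    obtain ⟨C₁, hembS₀, hurel, hphy, hlen⟩ := hstep
    obtain ⟨S₁, huS₁, hembT₁'⟩ := RTree.urel_transfer hS₀T₁ C₁ hembS₀
    have hphy1 : S₁.IsPhylo := ((RTree.urel_perm huS₁).nodup_iff).mp hphy
    have hlen1 : S₁.numLeaves = (c :: cs).length := by
      rw [RTree.numLeaves, ← (RTree.urel_perm huS₁).length_eq, ← RTree.numLeaves, hlen]
    have hmast := RTree.umast_ge hembT₁' hembT₂
      (RTree.urel_trans (RTree.urel_symm huS₁) hurel) hphy1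
    rw [hlen1] at hmast
    exact_mod_cast le_trans (le_of_eq rfl) (by exact_mod_cast hmast)
  -- apply with the longer of zs, ws
  have hmain : ((max zs.length ws.length : ℕ) : ℝ) ≤ (RTree.umast T₁ T₂ : ℝ) ∨
      (zs = [] ∧ ws = []) := by
    have incside : zs ≠ [] → ((zs.length : ℝ)) ≤ (RTree.umast T₁ T₂ : ℝ) := by
      intro hz0
      obtain ⟨z, zs', hze⟩ := List.exists_cons_of_ne_nil hz0
      have hincsub : zs.Sublist σ := by
        apply RTree.sublist_of_pairwise_idxOf σ hσnd
        · intro x hx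
          exact hT₂mem x (hzs.mem x hx).2
        · exact hzs.pairwise
      have := key z zs' (hzs.emb z zs' hze) (Or.inl (by rw [← hze]; exact hincsub))
      rw [← hze] at this
      exact this
    have decside : ws ≠ [] → ((ws.length : ℝ)) ≤ (RTree.umast T₁ T₂ : ℝ) := by
      intro hw0
      obtain ⟨w, ws', hwe⟩ := List.exists_cons_of_ne_nil hw0
      have hrevsub : ws.reverse.Sublist σ := by
        apply RTree.sublist_of_pairwise_idxOf σ hσnd
        · intro x hx
          exact hT₂mem x (hws.mem x (List.mem_reverse.mp hx)).2
        · rw [List.pairwise_reverse]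
          exact hws.pairwise
      have := key w ws' (hws.emb w ws' hwe) (Or.inr (by rw [← hwe]; exact hrevsub))
      rw [← hwe] at this
      exact this
    by_cases hz0 : zs = []
    · by_cases hw0 : ws = []
      · exact Or.inr ⟨hz0, hw0⟩
      · left
        have hmax : max zs.length ws.length = ws.length := by rw [hz0]; simp
        rw [hmax]
        exact decside hw0
    · left
      by_cases hcmp : ws.length ≤ zs.length
      · have hmax : max zs.length ws.length = zs.length := max_eq_left hcmp
        rw [hmax]
        exact incside hz0
      · have hw0 : ws ≠ [] := by
          intro h
          rw [h] at hcmp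
          simp at hcmp
        have hmax : max zs.length ws.length = ws.length := max_eq_right (by omega)
        rw [hmax]
        exact decside hw0
  rcases hmain with hmain | ⟨hz0, hw0⟩
  · -- n ≤ (4/25)*(5/2)^(2*max)
    set k := max zs.length ws.length with hk
    have hnk : (n : ℝ) ≤ (4/25) * (5/2:ℝ)^(2*k) := by
      rw [hn2] at hcount'
      refine le_trans hcount' ?_
      have hle : zs.length + ws.length ≤ 2 * k := by
        rw [hk]; omega
      have := pow_le_pow_right₀ (show (1:ℝ) ≤ 5/2 by norm_num) hle
      nlinarith
    exact le_trans (RTree.final_arith hn1 hnk) hmain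
  · exfalso
    rw [hz0, hw0] at hcount'
    simp only [List.length_nil, Nat.add_zero, pow_zero, mul_one] at hcount'
    rw [hn2] at hcount'
    have : (1:ℝ) ≤ (n:ℝ) := by exact_mod_cast hn1
    linarith
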